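/- Let (T, μ) be a measure space, let β be a real number, and let pν, pθ, R : T → ℝ be measurable functions with pν(τ) > 0 and pθ(τ) > 0 for all τ, ∫ pν dμ = 1, and such that the functions τ ↦ pν(τ)·(1 + log(pθ(τ)/pν(τ)))·R(τ) and τ ↦ pν(τ)·log(pθ(τ)/pν(τ)) are integrable. Define J^β(θ) = ∫ pν(τ)·(1 + log(pθ(τ)/pν(τ)))·(R(τ) + β) dμ(τ) − β and J^0(θ) = ∫ pν(τ)·(1 + log(pθ(τ)/pν(τ)))·R(τ) dμ(τ). Then J^β(θ) − J^0(θ) = −β · ∫ pν(τ)·log(pν(τ)/pθ(τ)) dμ(τ), i.e., the difference equals minus β times the Kullback–Leibler divergence of pν from pθ. -/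
import Mathlib


open MeasureTheory

theorem shifted_bound_KL_difference
    {T : Type*} [MeasurableSpace T] (μ : Measure T) (β : ℝ)
    (pν pθ R : T → ℝ)
    (hmν : Measurable pν) (hmθ : Measurable pθ) (hmR : Measurable R)
    (hν : ∀ τ, 0 < pν τ) (hθ : ∀ τ, 0 < pθ τ)
    (hint1 : ∫ τ, pν τ ∂μ = 1)
    (hi1 : Integrable (fun τ => pν τ * (1 + Real.log (pθ τ / pν τ)) * R τ) μ)
    (hi2 : Integrable (fun τ => pν τ * Real.log (pθ τ / pν τ)) μ) :
    (∫ τ, pν τ * (1 + Real.log (pθ τ / pν τ)) * (R τ + β) ∂μ - β) -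
        ∫ τ, pν τ * (1 + Real.log (pθ τ / pν τ)) * R τ ∂μ =
      -β * ∫ τ, pν τ * Real.log (pν τ / pθ τ) ∂μ := by
  have hiν : Integrable pν μ := by
    by_contra h
    rw [integral_undef h] at hint1
    norm_num at hint1
  have hlog : ∀ τ, Real.log (pν τ / pθ τ) = -Real.log (pθ τ / pν τ) := by
    intro τ
    rw [Real.log_div (hν τ).ne' (hθ τ).ne', Real.log_div (hθ τ).ne' (hν τ).ne']
    ring
  have h3 : (∫ τ, pν τ * Real.log (pν τ / pθ τ) ∂μ)
      = -∫ τ, pν τ * Real.log (pθ τ / pν τ) ∂μ := by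
    rw [← integral_neg]
    congr 1; funext τ; rw [hlog τ]; ring
  have key : ∀ τ, pν τ * (1 + Real.log (pθ τ / pν τ)) * (R τ + β)
      = pν τ * (1 + Real.log (pθ τ / pν τ)) * R τ
        + (β * pν τ + β * (pν τ * Real.log (pθ τ / pν τ))) := by
    intro τ; ring
  have hsplit : (∫ τ, pν τ * (1 + Real.log (pθ τ / pν τ)) * (R τ + β) ∂μ)
      = (∫ τ, pν τ * (1 + Real.log (pθ τ / pν τ)) * R τ ∂μ)
        + (β * ∫ τ, pν τ ∂μ + β * ∫ τ, pν τ * Real.log (pθ τ / pν τ) ∂μ) := by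
    have hadd : Integrable (fun τ => β * pν τ + β * (pν τ * Real.log (pθ τ / pν τ))) μ :=
      (hiν.const_mul β).add (hi2.const_mul β)
    rw [← integral_const_mul β, ← integral_const_mul β, ← integral_add (hiν.const_mul β) (hi2.const_mul β),
      ← integral_add hi1 hadd]
    congr 1; funext τ; exact key τ
  rw [hsplit, hint1, h3]
  ring
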